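/- Let X be a measurable space, α ∈ (0,1], M ≥ 0, and let T ≥ 1 and r ∈ {1,…,T} be integers. Let B_r, …, B_{T−1} be Markov kernels on X, each α-minorized. For t = r, …, T let η_t and μ_t be probability measures on X and let G_t : X → [0, M] be measurable. Let f : X → ℝ be measurable with |f| ≤ 1 pointwise. Define R_r f := f and, for r ≤ t < T, R_{t+1} f (x) := ∫_X (R_t f)(z) B_t(x, dz). Then ∑_{t=r}^{T} ∫_X G_t(x)² · (R_t f(x) − ∫_X R_t f(x') dμ_t(x'))² dη_t(x) ≤ 4 M² / α, a bound which is uniform in the time horizon T. (This is the uniform-in-time part of the asymptotic variance bound for blocked forward smoothing corresponding to the backward-kernel compositions: each term is bounded by M²·4·(1−α)^{t−r}, and the geometric series sums to at most 4M²/α.) -/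

import Mathlib

open MeasureTheory ProbabilityTheory

/-- `Rchain B r f n` is `R_{r+n} f`, defined by `R_r f = f` and
`R_{t+1} f (x) = ∫ (R_t f)(z) B_t(x, dz)`. -/
noncomputable def Rchain {X : Type*} [MeasurableSpace X]
    (B : ℕ → Kernel X X) (r : ℕ) (f : X → ℝ) : ℕ → X → ℝ
  | 0 => f
  | n + 1 => fun x => ∫ z, Rchain B r f n z ∂(B (r + n) x)

section Aux

variable {X : Type*} [MeasurableSpace X]

lemma integrable_of_abs_le {μ : Measure X} [IsFiniteMeasure μ] {g : X → ℝ} {C : ℝ}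
    (hg : Measurable g) (hb : ∀ x, |g x| ≤ C) : Integrable g μ :=
  (integrable_const C).mono' hg.aestronglyMeasurable
    (Filter.Eventually.of_forall fun x => by simpa using hb x)

lemma abs_sub_integral_le {μ : Measure X} [IsProbabilityMeasure μ] {g : X → ℝ} {C c : ℝ}
    (hg : Measurable g) (hb : ∀ x, |g x| ≤ C) (hosc : ∀ u v, |g u - g v| ≤ c) (u : X) :
    |g u - ∫ v, g v ∂μ| ≤ c := by
  have hint : Integrable g μ := integrable_of_abs_le hg hb
  have h1 : ∫ v, g v ∂μ ≤ g u + c := by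
    calc ∫ v, g v ∂μ ≤ ∫ _, (g u + c) ∂μ := by
          refine integral_mono hint (integrable_const _) fun v => ?_
          have := abs_le.1 (hosc v u)
          linarith [this.2]
      _ = g u + c := by simp
  have h2 : g u - c ≤ ∫ v, g v ∂μ := by
    calc g u - c = ∫ _, (g u - c) ∂μ := by simp
      _ ≤ ∫ v, g v ∂μ := by
          refine integral_mono (integrable_const _) hint fun v => ?_
          have := abs_le.1 (hosc u v)
          linarith [this.1]
  rw [abs_le]; constructor <;> linarith

/-- the one-step contraction for an α-minorized Markov kernel. -/
lemma osc_contract {α : ℝ} (hα0 : 0 < α) (hα1 : α ≤ 1) (κ : Kernel X X) [IsMarkovKernel κ]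
    (hmin : ∀ x x' : X, ∀ A : Set X, MeasurableSet A →
      ENNReal.ofReal α * κ x' A ≤ κ x A)
    {g : X → ℝ} {c : ℝ} (hg : Measurable g) (hb : ∀ x, |g x| ≤ 1)
    (hosc : ∀ u v, |g u - g v| ≤ c) (x y : X) :
    |(∫ z, g z ∂κ x) - ∫ z, g z ∂κ y| ≤ (1 - α) * c := by
  have hc : 0 ≤ c := le_trans (abs_nonneg _) (hosc x x)
  haveI hfin : IsFiniteMeasure ((ENNReal.ofReal α) • κ y) := by
    constructor
    simp only [Measure.smul_apply, smul_eq_mul, measure_univ, mul_one]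
    exact ENNReal.ofReal_lt_top
  have hle : (ENNReal.ofReal α) • κ y ≤ κ x := by
    rw [Measure.le_iff]
    intro s hs
    simpa [Measure.smul_apply, smul_eq_mul] using hmin x y s hs
  set ν : Measure X := κ x - (ENNReal.ofReal α) • κ y with hν
  have hdecomp : ν + (ENNReal.ofReal α) • κ y = κ x :=
    Measure.sub_add_cancel_of_le hle
  haveI hνfin : IsFiniteMeasure ν := by
    constructor
    have h2 : ν Set.univ ≤ κ x Set.univ := by
      conv_rhs => rw [← hdecomp]
      simp only [Measure.add_apply]
      exact le_add_right le_rfl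
    exact lt_of_le_of_lt h2 (measure_lt_top _ _)
  have hνuniv : (ν Set.univ).toReal = 1 - α := by
    have h3 : ν Set.univ = κ x Set.univ - ((ENNReal.ofReal α) • κ y) Set.univ :=
      Measure.sub_apply MeasurableSet.univ hle
    rw [h3]
    simp only [measure_univ, Measure.smul_apply, smul_eq_mul, mul_one]
    rw [ENNReal.toReal_sub_of_le (by simpa using ENNReal.ofReal_le_one.2 hα1) (by simp)]
    simp [ENNReal.toReal_ofReal hα0.le]
  have hinty : Integrable g (κ y) := integrable_of_abs_le hg hb
  have hintν : Integrable g ν := integrable_of_abs_le hg hb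
  set m : ℝ := ∫ z, g z ∂κ y with hm
  have hsplit : ∫ z, g z ∂κ x = (∫ z, g z ∂ν) + α * m := by
    conv_lhs => rw [← hdecomp]
    rw [integral_add_measure hintν
      ((integrable_smul_measure (ENNReal.ofReal_pos.2 hα0).ne' ENNReal.ofReal_ne_top).2 hinty),
      integral_smul_measure, ENNReal.toReal_ofReal hα0.le, smul_eq_mul]
  have hub : ∀ u, |g u - m| ≤ c := fun u => abs_sub_integral_le hg hb hosc u
  have hνub : ∫ z, g z ∂ν ≤ (m + c) * (1 - α) := by
    calc ∫ z, g z ∂ν ≤ ∫ _, (m + c) ∂ν := by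
          refine integral_mono hintν (integrable_const _) fun v => ?_
          have := abs_le.1 (hub v); linarith [this.2]
      _ = (m + c) * (1 - α) := by
          rw [integral_const, measureReal_def, hνuniv, smul_eq_mul]; ring
  have hνlb : (m - c) * (1 - α) ≤ ∫ z, g z ∂ν := by
    calc (m - c) * (1 - α) = ∫ _, (m - c) ∂ν := by
          rw [integral_const, measureReal_def, hνuniv, smul_eq_mul]; ring
      _ ≤ ∫ z, g z ∂ν := by
          refine integral_mono (integrable_const _) hintν fun v => ?_
          have := abs_le.1 (hub v); linarith [this.1]
  rw [hsplit, abs_le]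
  constructor <;> nlinarith

lemma Rchain_measurable
    (B : ℕ → Kernel X X) [∀ t, IsMarkovKernel (B t)] (r : ℕ) {f : X → ℝ}
    (hf : Measurable f) : ∀ n, Measurable (Rchain B r f n)
  | 0 => hf
  | n + 1 => by
    have ih := Rchain_measurable B r hf n
    have h : StronglyMeasurable fun p : X × X => Rchain B r f n p.2 :=
      (ih.comp measurable_snd).stronglyMeasurable
    exact (h.integral_kernel_prod_right').measurable

lemma Rchain_abs_le
    (B : ℕ → Kernel X X) [∀ t, IsMarkovKernel (B t)] (r : ℕ) {f : X → ℝ}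
    (hf : Measurable f) (hb : ∀ x, |f x| ≤ 1) : ∀ n x, |Rchain B r f n x| ≤ 1
  | 0, x => hb x
  | n + 1, x => by
    have ih := Rchain_abs_le B r hf hb n
    show |∫ z, Rchain B r f n z ∂(B (r + n) x)| ≤ 1
    have habs : |∫ z, Rchain B r f n z ∂(B (r + n) x)|
        ≤ ∫ z, |Rchain B r f n z| ∂(B (r + n) x) := by
      have h := norm_integral_le_integral_norm (μ := B (r + n) x) (Rchain B r f n)
      simpa [Real.norm_eq_abs] using h
    calc |∫ z, Rchain B r f n z ∂(B (r + n) x)|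
        ≤ ∫ z, |Rchain B r f n z| ∂(B (r + n) x) := habs
      _ ≤ ∫ _, (1:ℝ) ∂(B (r + n) x) := by
          refine integral_mono ?_ (integrable_const _) fun z => ih z
          exact (integrable_of_abs_le (Rchain_measurable B r hf n) ih).abs
      _ = 1 := by simp

end Aux

/-- With `α`-minorized Markov backward kernels `B_r, …, B_{T−1}`, potentials
`G_t` bounded by `M`, probability measures `η_t, μ_t`, `|f| ≤ 1`, and
`R_r f = f`, `R_{t+1} f (x) = ∫ R_t f dB_t(x,·)`, one has
`∑_{t=r}^{T} ∫ G_t(x)² (R_t f(x) − ∫ R_t f dμ_t)² dη_t(x) ≤ 4M²/α`,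
uniformly in the time horizon `T`. -/
theorem stmt_10 {X : Type*} [MeasurableSpace X]
    (α : ℝ) (hα0 : 0 < α) (hα1 : α ≤ 1) (M : ℝ) (hM : 0 ≤ M)
    (T r : ℕ) (hT : 1 ≤ T) (hr : 1 ≤ r) (hrT : r ≤ T)
    (B : ℕ → Kernel X X) [∀ t, IsMarkovKernel (B t)]
    (hminor : ∀ t, r ≤ t → t ≤ T - 1 → ∀ x x' : X, ∀ A : Set X, MeasurableSet A →
      ENNReal.ofReal α * (B t) x' A ≤ (B t) x A)
    (η μ : ℕ → Measure X)
    (hη : ∀ t, IsProbabilityMeasure (η t)) (hμ : ∀ t, IsProbabilityMeasure (μ t))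
    (G : ℕ → X → ℝ) (hG_meas : ∀ t, Measurable (G t))
    (hG_nonneg : ∀ t x, 0 ≤ G t x) (hG_le : ∀ t x, G t x ≤ M)
    (f : X → ℝ) (hf_meas : Measurable f) (hf_le : ∀ x, |f x| ≤ 1) :
    ∑ t ∈ Finset.Icc r T,
        ∫ x, (G t x) ^ 2
            * (Rchain B r f (t - r) x - ∫ x', Rchain B r f (t - r) x' ∂(μ t)) ^ 2 ∂(η t)
      ≤ 4 * M ^ 2 / α := by
  have hα1' : (0:ℝ) ≤ 1 - α := by linarith
  -- oscillation contraction along the chain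
  have hosc : ∀ n, r + n ≤ T → ∀ x y,
      |Rchain B r f n x - Rchain B r f n y| ≤ 2 * (1 - α) ^ n := by
    intro n
    induction n with
    | zero =>
      intro _ x y
      have h1 := abs_le.1 (hf_le x)
      have h2 := abs_le.1 (hf_le y)
      show |f x - f y| ≤ 2 * (1 - α) ^ 0
      rw [abs_le]; constructor <;> simp <;> linarith [h1.1, h1.2, h2.1, h2.2]
    | succ n ih =>
      intro h x y
      have hn : r + n ≤ T := by omega
      have hmin' := hminor (r + n) (by omega) (by omega)
      have hcon := osc_contract hα0 hα1 (B (r + n)) hmin'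
        (Rchain_measurable B r hf_meas n) (Rchain_abs_le B r hf_meas hf_le n) (ih hn) x y
      show |(∫ z, Rchain B r f n z ∂(B (r + n) x)) - ∫ z, Rchain B r f n z ∂(B (r + n) y)|
          ≤ 2 * (1 - α) ^ (n + 1)
      calc _ ≤ (1 - α) * (2 * (1 - α) ^ n) := hcon
        _ = 2 * (1 - α) ^ (n + 1) := by ring
  -- per-term bound
  have hterm : ∀ t ∈ Finset.Icc r T,
      ∫ x, (G t x) ^ 2
          * (Rchain B r f (t - r) x - ∫ x', Rchain B r f (t - r) x' ∂(μ t)) ^ 2 ∂(η t)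
        ≤ 4 * M ^ 2 * (1 - α) ^ (t - r) := by
    intro t ht
    obtain ⟨ht1, ht2⟩ := Finset.mem_Icc.1 ht
    haveI := hη t; haveI := hμ t
    set n := t - r with hn
    have hrn : r + n ≤ T := by omega
    set ρ : ℝ := (1 - α) ^ n with hρ
    have hρ0 : 0 ≤ ρ := pow_nonneg hα1' n
    have hρ1 : ρ ≤ 1 := pow_le_one₀ hα1' (by linarith)
    have hd : ∀ x, |Rchain B r f n x - ∫ x', Rchain B r f n x' ∂(μ t)| ≤ 2 * ρ := fun x =>
      abs_sub_integral_le (Rchain_measurable B r hf_meas n)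
        (Rchain_abs_le B r hf_meas hf_le n) (hosc n hrn) x
    have hpt : ∀ x, (G t x) ^ 2
        * (Rchain B r f n x - ∫ x', Rchain B r f n x' ∂(μ t)) ^ 2 ≤ 4 * M ^ 2 * ρ := by
      intro x
      have h1 : (G t x) ^ 2 ≤ M ^ 2 := pow_le_pow_left₀ (hG_nonneg t x) (hG_le t x) 2
      have h2 := abs_le.1 (hd x)
      have h3 : (Rchain B r f n x - ∫ x', Rchain B r f n x' ∂(μ t)) ^ 2 ≤ (2 * ρ) ^ 2 :=
        sq_le_sq' h2.1 h2.2
      have h4 : (2 * ρ) ^ 2 ≤ 4 * ρ := by nlinarith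
      nlinarith [sq_nonneg (G t x), sq_nonneg (Rchain B r f n x - ∫ x', Rchain B r f n x' ∂(μ t))]
    have hmeas : Measurable fun x => (G t x) ^ 2
        * (Rchain B r f n x - ∫ x', Rchain B r f n x' ∂(μ t)) ^ 2 :=
      ((hG_meas t).pow_const 2).mul
        (((Rchain_measurable B r hf_meas n).sub measurable_const).pow_const 2)
    have hint : Integrable (fun x => (G t x) ^ 2
        * (Rchain B r f n x - ∫ x', Rchain B r f n x' ∂(μ t)) ^ 2) (η t) := by
      refine integrable_of_abs_le hmeas (C := 4 * M ^ 2 * ρ) fun x => ?_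
      rw [abs_of_nonneg (by positivity)]
      exact hpt x
    calc ∫ x, (G t x) ^ 2
          * (Rchain B r f n x - ∫ x', Rchain B r f n x' ∂(μ t)) ^ 2 ∂(η t)
        ≤ ∫ _, 4 * M ^ 2 * ρ ∂(η t) := integral_mono hint (integrable_const _) hpt
      _ = 4 * M ^ 2 * ρ := by simp
  -- geometric series
  have hgeo : ∑ t ∈ Finset.Icc r T, (1 - α) ^ (t - r) ≤ 1 / α := by
    rw [← Finset.Ico_add_one_right_eq_Icc, Finset.sum_Ico_eq_sum_range]
    have hsimp : ∀ i, (1 - α) ^ (r + i - r) = (1 - α) ^ i := fun i => by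
      rw [Nat.add_sub_cancel_left]
    rw [Finset.sum_congr rfl fun i _ => hsimp i]
    rw [geom_sum_eq (by intro hcon; rw [sub_eq_iff_eq_add] at hcon; linarith) _]
    have h5 : (1 - α) - 1 = -α := by ring
    rw [h5, div_neg, ← neg_div, neg_sub]
    have h6 : 1 - (1 - α) ^ (T + 1 - r) ≤ 1 := by
      nlinarith [pow_nonneg hα1' (T + 1 - r)]
    gcongr
  calc ∑ t ∈ Finset.Icc r T, ∫ x, (G t x) ^ 2
          * (Rchain B r f (t - r) x - ∫ x', Rchain B r f (t - r) x' ∂(μ t)) ^ 2 ∂(η t)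
      ≤ ∑ t ∈ Finset.Icc r T, 4 * M ^ 2 * (1 - α) ^ (t - r) := Finset.sum_le_sum hterm
    _ = 4 * M ^ 2 * ∑ t ∈ Finset.Icc r T, (1 - α) ^ (t - r) := by rw [Finset.mul_sum]
    _ ≤ 4 * M ^ 2 * (1 / α) := mul_le_mul_of_nonneg_left hgeo (by positivity)
    _ = 4 * M ^ 2 / α := by ring
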